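/- Let y_1, …, y_{N−1} solve the periodic semi-discrete FtL system. Then the total variation is nonincreasing in time: for every t ≥ 0, Σ_{j=1}^{N−1} |y_{j+1}(t) − y_j(t)| ≤ Σ_{j=1}^{N−1} |y_{j+1}(0) − y_j(0)|, where indices are taken cyclically (y_N := y_1). -/

import Mathlib

/-- `y j`, `j = 1, …, N-1`, solves the periodic semi-discrete Follow-the-Leader
system `ẏ_j(t) = (1/ℓ)(V(y_{j+1}(t)) − V(y_j(t)))` on `[0, ∞)`, with the
periodic convention `y_N := y_1`. -/
def IsFtLSolution (N : ℕ) (ℓ : ℝ) (V : ℝ → ℝ) (y : ℕ → ℝ → ℝ) : Prop :=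
  (∀ t : ℝ, y N t = y 1 t) ∧
  ∀ j ∈ Finset.Icc 1 (N - 1), ∀ t ∈ Set.Ici (0 : ℝ),
    HasDerivWithinAt (y j) (1 / ℓ * (V (y (j + 1) t) - V (y j t))) (Set.Ici (0 : ℝ)) t

/-- The (cyclic) total variation of a solution of the periodic semi-discrete
FtL system is nonincreasing in time (indices cyclic, `y_N := y_1`). -/
theorem ftl_total_variation_nonincreasing
    (N : ℕ) (hN : 2 ≤ N) (ℓ : ℝ) (hℓ : 0 < ℓ)
    (V : ℝ → ℝ) (LV : NNReal) (hVlip : LipschitzWith LV V) (hVmono : Monotone V)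
    (y : ℕ → ℝ → ℝ) (hy : IsFtLSolution N ℓ V y)
    (t : ℝ) (ht : 0 ≤ t) :
    ∑ j ∈ Finset.Icc 1 (N - 1), |y (j + 1) t - y j t| ≤
      ∑ j ∈ Finset.Icc 1 (N - 1), |y (j + 1) 0 - y j 0| := by
  obtain ⟨hper, hode⟩ := hy
  set I : Finset ℕ := Finset.Icc 1 (N - 1) with hI
  -- cyclic successor on I
  set σ : ℕ → ℕ := fun j => if j = N - 1 then 1 else j + 1 with hσ
  have hσmem : ∀ j ∈ I, σ j ∈ I := by
    intro j hj
    simp only [hI, Finset.mem_Icc] at hj ⊢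
    by_cases h : j = N - 1
    · simp [hσ, h]; omega
    · simp [hσ, h]; omega
  have hy_succ : ∀ j ∈ I, ∀ s : ℝ, y (σ j) s = y (j + 1) s := by
    intro j hj s
    simp only [hI, Finset.mem_Icc] at hj
    by_cases h : j = N - 1
    · have h1 : j + 1 = N := by omega
      have h2 : σ j = 1 := by simp [hσ, h]
      rw [h2, h1, hper s]
    · simp [hσ, h]
  -- derivative value functions
  set w : ℕ → ℝ → ℝ := fun j s => 1 / ℓ * (V (y (j + 1) s) - V (y j s)) with hw
  set d : ℕ → ℝ → ℝ := fun j s => y (σ j) s - y j s with hd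
  set D : ℕ → ℝ → ℝ := fun j x => w (σ j) x - w j x with hD
  set e : ℕ → ℝ → ℝ := fun j x =>
    if 0 < d j x then D j x else if d j x < 0 then -D j x else |D j x| with he
  set Φ : ℝ → ℝ := fun s => ∑ j ∈ I, |d j s| with hΦ
  have hderiv : ∀ j ∈ I, ∀ x ∈ Set.Ici (0 : ℝ),
      HasDerivWithinAt (y j) (w j x) (Set.Ici (0 : ℝ)) x := hode
  have hcont : ∀ j ∈ I, ContinuousOn (y j) (Set.Ici 0) := by
    intro j hj x hx
    exact (hderiv j hj x hx).continuousWithinAt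
  -- derivative of d j within Ici x for x ∈ [0, t)
  have hdD : ∀ j ∈ I, ∀ x ∈ Set.Ico (0 : ℝ) t,
      HasDerivWithinAt (d j) (D j x) (Set.Ici x) x := by
    intro j hj x hx
    have hx0 : x ∈ Set.Ici (0 : ℝ) := hx.1
    have hsub : Set.Ici x ⊆ Set.Ici (0 : ℝ) := Set.Ici_subset_Ici.2 hx.1
    exact ((hderiv (σ j) (hσmem j hj) x hx0).mono hsub).sub
      ((hderiv j hj x hx0).mono hsub)
  -- derivative of |d j|
  have habs : ∀ j ∈ I, ∀ x ∈ Set.Ico (0 : ℝ) t,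
      HasDerivWithinAt (fun s => |d j s|) (e j x) (Set.Ici x) x := by
    intro j hj x hx
    have hder := hdD j hj x hx
    rcases lt_trichotomy (d j x) 0 with hneg | h0 | hpos
    · have hev : ∀ᶠ s in nhdsWithin x (Set.Ici x), d j s < 0 :=
        hder.continuousWithinAt.eventually (eventually_lt_nhds hneg)
      have heq : (fun s => |d j s|) =ᶠ[nhdsWithin x (Set.Ici x)] fun s => -d j s := by
        filter_upwards [hev] with s hs
        exact abs_of_neg hs
      have : HasDerivWithinAt (fun s => -d j s) (-D j x) (Set.Ici x) x := hder.neg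
      have := this.congr_of_eventuallyEq heq (abs_of_neg hneg)
      simpa [he, hneg, not_lt.2 hneg.le] using this
    · -- d j x = 0 : right derivative of |d j| is |D j x|
      have hiff := hasDerivWithinAt_iff_tendsto_slope.1 hder
      have habs' : Filter.Tendsto (fun z => |slope (d j) x z|)
          (nhdsWithin x (Set.Ici x \ {x})) (nhds |D j x|) :=
        (continuous_abs.continuousAt.tendsto).comp hiff
      have heq : ∀ z ∈ Set.Ici x \ {x},
          slope (fun s => |d j s|) x z = |slope (d j) x z| := by
        intro z hz
        have hzx : x < z := lt_of_le_of_ne hz.1 (fun h => hz.2 h.symm)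
        rw [slope_def_field, slope_def_field, h0, abs_zero, sub_zero, sub_zero,
          abs_div, abs_of_pos (sub_pos.2 hzx)]
      have : Filter.Tendsto (slope (fun s => |d j s|) x)
          (nhdsWithin x (Set.Ici x \ {x})) (nhds |D j x|) := by
        refine habs'.congr' ?_
        filter_upwards [self_mem_nhdsWithin] with z hz
        exact (heq z hz).symm
      have hres := hasDerivWithinAt_iff_tendsto_slope.2 this
      simpa [he, h0, lt_irrefl] using hres
    · have hev : ∀ᶠ s in nhdsWithin x (Set.Ici x), 0 < d j s :=
        hder.continuousWithinAt.eventually (eventually_gt_nhds hpos)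
      have heq : (fun s => |d j s|) =ᶠ[nhdsWithin x (Set.Ici x)] d j := by
        filter_upwards [hev] with s hs
        exact abs_of_pos hs
      have := hder.congr_of_eventuallyEq heq (abs_of_pos hpos)
      simpa [he, hpos] using this
  -- derivative of Φ
  have hΦ' : ∀ x ∈ Set.Ico (0 : ℝ) t,
      HasDerivWithinAt Φ (∑ j ∈ I, e j x) (Set.Ici x) x := by
    intro x hx
    exact HasDerivWithinAt.fun_sum fun j hj => habs j hj x hx
  -- sign facts : w j x ⋚ 0 according to d j x
  have hwd : ∀ j ∈ I, ∀ x : ℝ, e j x ≤ |w (σ j) x| - |w j x| := by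
    intro j hj x
    have hyx : y (j + 1) x = y (σ j) x := (hy_succ j hj x).symm
    have hℓ' : 0 < 1 / ℓ := by positivity
    rcases lt_trichotomy (d j x) 0 with hneg | h0 | hpos
    · have hwj : w j x ≤ 0 := by
        have : y (j + 1) x ≤ y j x := by
          rw [hyx]; have := hneg; simp only [hd] at this; linarith
        have := hVmono this
        simp only [hw]
        nlinarith
      have : e j x = w j x - w (σ j) x := by
        simp [he, hneg, not_lt.2 hneg.le, hD]
      rw [this, abs_of_nonpos hwj]
      have := neg_abs_le (w (σ j) x)
      linarith
    · have hwj : w j x = 0 := by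
        have : y (j + 1) x = y j x := by
          rw [hyx]; simp only [hd] at h0; linarith
        simp [hw, this]
      have : e j x = |w (σ j) x - w j x| := by simp [he, h0, lt_irrefl, hD]
      rw [this, hwj, sub_zero, abs_zero, sub_zero]
    · have hwj : 0 ≤ w j x := by
        have : y j x ≤ y (j + 1) x := by
          rw [hyx]; simp only [hd] at hpos; linarith
        have := hVmono this
        simp only [hw]
        nlinarith
      have : e j x = w (σ j) x - w j x := by simp [he, hpos, hD]
      rw [this, abs_of_nonneg hwj]
      have := le_abs_self (w (σ j) x)
      linarith
  -- cyclic sum identity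
  have hcyc : ∀ x : ℝ, ∑ j ∈ I, |w (σ j) x| = ∑ j ∈ I, |w j x| := by
    intro x
    refine Finset.sum_nbij' σ (fun k => if k = 1 then N - 1 else k - 1) ?_ ?_ ?_ ?_ ?_
    · exact fun j hj => hσmem j hj
    · intro k hk
      simp only [hI, Finset.mem_Icc] at hk ⊢
      by_cases h : k = 1 <;> simp [h] <;> omega
    · intro j hj
      simp only [hI, Finset.mem_Icc] at hj
      by_cases h : j = N - 1
      · simp [hσ, h]
      · have : ¬ (j + 1 = 1) := by omega
        simp [hσ, h, this]; omega
    · intro k hk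
      simp only [hI, Finset.mem_Icc] at hk
      by_cases h : k = 1
      · simp [hσ, h]
      · have h1 : ¬ (k - 1 = N - 1) := by omega
        have h2 : k - 1 + 1 = k := by omega
        simp [hσ, h, h1, h2]
    · intro j hj; rfl
  have hbound : ∀ x ∈ Set.Ico (0 : ℝ) t, (∑ j ∈ I, e j x) ≤ 0 := by
    intro x _
    calc ∑ j ∈ I, e j x ≤ ∑ j ∈ I, (|w (σ j) x| - |w j x|) :=
          Finset.sum_le_sum fun j hj => hwd j hj x
      _ = 0 := by rw [Finset.sum_sub_distrib, hcyc x, sub_self]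
  -- continuity of Φ on [0, t]
  have hΦcont : ContinuousOn Φ (Set.Icc 0 t) := by
    apply continuousOn_finset_sum
    intro j hj
    exact (((hcont (σ j) (hσmem j hj)).sub (hcont j hj)).abs).mono Set.Icc_subset_Ici_self
  -- apply the fencing theorem with B = const
  have key : ∀ s ∈ Set.Icc (0 : ℝ) t, Φ s ≤ Φ 0 := by
    intro s hs
    have := image_le_of_deriv_right_le_deriv_boundary (f' := fun x => ∑ j ∈ I, e j x)
      (B := fun _ => Φ 0) (B' := fun _ => 0) hΦcont hΦ' le_rfl continuousOn_const
      (fun x _ => hasDerivWithinAt_const x _ (Φ 0)) hbound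
    exact this hs
  have hΦeq : ∀ s : ℝ, (∑ j ∈ Finset.Icc 1 (N - 1), |y (j + 1) s - y j s|) = Φ s := by
    intro s
    refine Finset.sum_congr rfl fun j hj => ?_
    simp only [hΦ, hd]
    rw [hy_succ j hj s]
  rw [hΦeq t, hΦeq 0]
  exact key t ⟨ht, le_rfl⟩
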